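/- Let n, k be positive integers and let n_1, ..., n_k be positive reals summing to n. With f(x) = (x^3 + 3x^2 + 2x + 2)/2, the product ∏_{i=1}^k f(n_i) is at most f(n/k)^k. -/

import Mathlib

/-- `f(x) = (x³ + 3x² + 2x + 2)/2`. -/
noncomputable def f (x : ℝ) : ℝ := (x ^ 3 + 3 * x ^ 2 + 2 * x + 2) / 2

lemma f_pos {x : ℝ} (hx : 1 ≤ x) : 0 < f x := by
  unfold f; nlinarith

lemma f_hasDerivAt (x : ℝ) : HasDerivAt f ((3 * x ^ 2 + 6 * x + 2) / 2) x := by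
  have h := ((((hasDerivAt_pow 3 x).add ((hasDerivAt_pow 2 x).const_mul 3)).add
      ((hasDerivAt_id x).const_mul 2)).add_const 2).div_const 2
  convert h using 1
  · rfl
  · rfl
  · funext y; simp [f]
  · norm_num; ring

lemma g_hasDerivAt {x : ℝ} (hx : 1 ≤ x) :
    HasDerivAt (fun y => Real.log (f y)) ((3 * x ^ 2 + 6 * x + 2) / 2 / f x) x :=
  (f_hasDerivAt x).log (f_pos hx).ne'

lemma logf_concave : ConcaveOn ℝ (Set.Ici 1) (fun y => Real.log (f y)) := by
  have hint : interior (Set.Ici (1:ℝ)) = Set.Ioi 1 := interior_Ici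
  have hderiv : ∀ x ∈ Set.Ioi (1:ℝ),
      deriv (fun y => Real.log (f y)) x = (3 * x ^ 2 + 6 * x + 2) / 2 / f x := by
    intro x hx
    exact (g_hasDerivAt (le_of_lt hx)).deriv
  have hevent : ∀ x ∈ Set.Ioi (1:ℝ),
      deriv (fun y => Real.log (f y)) =ᶠ[nhds x]
        (fun y => (3 * y ^ 2 + 6 * y + 2) / 2 / f y) := by
    intro x hx
    filter_upwards [IsOpen.mem_nhds isOpen_Ioi hx] with y hy
    exact hderiv y hy
  have hd2 : ∀ x ∈ Set.Ioi (1:ℝ),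
      HasDerivAt (fun y => (3 * y ^ 2 + 6 * y + 2) / 2 / f y)
        (((3 * x + 3) * f x - (3 * x ^ 2 + 6 * x + 2) / 2 * ((3 * x ^ 2 + 6 * x + 2) / 2))
          / (f x) ^ 2) x := by
    intro x hx
    have h1 : HasDerivAt (fun y : ℝ => (3 * y ^ 2 + 6 * y + 2) / 2) (3 * x + 3) x := by
      have h := ((((hasDerivAt_pow 2 x).const_mul 3).add
          ((hasDerivAt_id x).const_mul 6)).add_const 2).div_const 2
      convert h using 1
      · rfl
      · rfl
      · funext y; simp
      · norm_num; ring
    exact h1.div (f_hasDerivAt x) (f_pos hx.le).ne'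
  apply concaveOn_of_deriv2_nonpos (convex_Ici 1)
  · exact Real.continuousOn_log.comp (Continuous.continuousOn (by unfold f; continuity))
      (fun x hx => (f_pos hx).ne')
  · rw [hint]
    exact fun x hx => (g_hasDerivAt hx.out.le).differentiableAt.differentiableWithinAt
  · rw [hint]
    intro x hx
    have := ((hd2 x hx).congr_of_eventuallyEq (hevent x hx)).differentiableAt
    exact this.differentiableWithinAt
  · rw [hint]
    intro x hx
    have hD : deriv (deriv (fun y => Real.log (f y))) x =
        ((3 * x + 3) * f x - (3 * x ^ 2 + 6 * x + 2) / 2 * ((3 * x ^ 2 + 6 * x + 2) / 2))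
          / (f x) ^ 2 := ((hd2 x hx).congr_of_eventuallyEq (hevent x hx)).deriv
    simp only [Function.iterate_succ, Function.iterate_zero, Function.comp_apply, id_eq]
    rw [hD]
    apply div_nonpos_of_nonpos_of_nonneg _ (sq_nonneg _)
    have hx1 : (1:ℝ) ≤ x := hx.out.le
    unfold f
    nlinarith [sq_nonneg x, sq_nonneg (x - 1), pow_le_pow_left₀ (by norm_num : (0:ℝ) ≤ 1) hx1 4]

/-- If `n₁, …, n_k ≥ 1` are reals summing to `n`, then `∏ f(nᵢ) ≤ f(n/k)^k`. -/
theorem prod_f_le_f_avg_pow (n k : ℕ) (hn : 0 < n) (hk : 0 < k)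
    (a : Fin k → ℝ) (ha : ∀ i, 1 ≤ a i) (hsum : ∑ i, a i = (n : ℝ)) :
    ∏ i, f (a i) ≤ f ((n : ℝ) / (k : ℝ)) ^ k := by
  have hk0 : (0:ℝ) < k := Nat.cast_pos.mpr hk
  have hjensen := logf_concave.le_map_sum (t := Finset.univ) (w := fun _ : Fin k => ((k:ℝ))⁻¹)
    (p := a) (fun i _ => by positivity)
    (by rw [Finset.sum_const, Finset.card_univ, Fintype.card_fin, nsmul_eq_mul]; exact mul_inv_cancel₀ hk0.ne') (fun i _ => ha i)
  have hsum' : ∑ i : Fin k, ((k:ℝ))⁻¹ • a i = (n : ℝ) / k := by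
    rw [← Finset.smul_sum, hsum]; rw [smul_eq_mul]; ring
  rw [hsum'] at hjensen
  simp only [smul_eq_mul] at hjensen
  have h1 : ∑ i : Fin k, Real.log (f (a i)) ≤ k * Real.log (f ((n:ℝ)/k)) := by
    have := mul_le_mul_of_nonneg_left hjensen hk0.le
    rw [Finset.mul_sum] at this
    calc ∑ i : Fin k, Real.log (f (a i))
        = ∑ i : Fin k, (k:ℝ) * (((k:ℝ))⁻¹ * Real.log (f (a i))) := by
          apply Finset.sum_congr rfl; intro i _; field_simp
      _ ≤ (k:ℝ) * Real.log (f ((n:ℝ)/k)) := this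
  have hnk1 : (1:ℝ) ≤ (n:ℝ)/k := by
    rw [le_div_iff₀ hk0, one_mul]
    calc (k:ℝ) = ∑ _i : Fin k, (1:ℝ) := by simp
      _ ≤ ∑ i, a i := Finset.sum_le_sum (fun i _ => ha i)
      _ = n := hsum
  have hfpos : ∀ i : Fin k, 0 < f (a i) := fun i => f_pos (ha i)
  have hprod : ∏ i, f (a i) = Real.exp (∑ i : Fin k, Real.log (f (a i))) := by
    rw [Real.exp_sum]
    exact Finset.prod_congr rfl (fun i _ => (Real.exp_log (hfpos i)).symm)
  rw [hprod]
  calc Real.exp (∑ i : Fin k, Real.log (f (a i)))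
      ≤ Real.exp ((k:ℝ) * Real.log (f ((n:ℝ)/k))) := Real.exp_le_exp.mpr h1
    _ = f ((n:ℝ)/k) ^ k := by
        rw [← Real.exp_log (f_pos hnk1), ← Real.exp_nat_mul]
        simp [Real.log_exp]
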